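/- For call-by-name xCL extended with erratic choice ⊕ and parallel composition ∥ (with value former ∥ᵥ): for every closed term t and every value v, t ⇓ v if and only if t →* v. -/

import Mathlib

/-- Closed terms of xCL extended with erratic choice `⊕`, parallel composition
`∥` and the value former `∥ᵥ`. -/
inductive Tm : Type
  | S : Tm
  | K : Tm
  | I : Tm
  | S1 : Tm → Tm
  | K1 : Tm → Tm
  | S2 : Tm → Tm → Tm
  | app : Tm → Tm → Tm
  | oplus : Tm → Tm → Tm
  | par : Tm → Tm → Tm
  | parv : Tm → Tm → Tm

/-- Values: topmost constructor among `S, K, I, S', K', S'', ∥ᵥ`. -/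
def Tm.IsValue : Tm → Prop
  | .app _ _ => False
  | .oplus _ _ => False
  | .par _ _ => False
  | _ => True

/-- Labeled value transitions `t ─s→ t'`, including
`(t ∥ᵥ s) ─r→ (t r) ∥ (s r)`. -/
inductive LStep : Tm → Tm → Tm → Prop
  | S (t : Tm) : LStep .S t (.S1 t)
  | S1 (t s : Tm) : LStep (.S1 t) s (.S2 t s)
  | S2 (t s r : Tm) : LStep (.S2 t s) r (.app (.app t r) (.app s r))
  | K (t : Tm) : LStep .K t (.K1 t)
  | K1 (t s : Tm) : LStep (.K1 t) s t
  | I (t : Tm) : LStep .I t t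
  | parv (t s r : Tm) : LStep (.parv t s) r (.par (.app t r) (.app s r))

/-- Unlabeled small-step transitions `t → t'`. -/
inductive Step : Tm → Tm → Prop
  | appL {t t' : Tm} (s : Tm) : Step t t' → Step (.app t s) (.app t' s)
  | beta {t t' s : Tm} : LStep t s t' → Step (.app t s) t'
  | choiceL (t s : Tm) : Step (.oplus t s) t
  | choiceR (t s : Tm) : Step (.oplus t s) s
  | parBoth {t t' s s' : Tm} : Step t t' → Step s s' → Step (.par t s) (.par t' s')
  | parR {t s s' : Tm} : t.IsValue → Step s s' → Step (.par t s) (.par t s')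
  | parL {t t' s : Tm} : Step t t' → s.IsValue → Step (.par t s) (.par t' s)
  | parVal {t s : Tm} : t.IsValue → s.IsValue → Step (.par t s) (.parv t s)


/-- Big-step semantics `t ⇓ v`. -/
inductive Big : Tm → Tm → Prop
  | val {v : Tm} : v.IsValue → Big v v
  | appI {s t v : Tm} : Big s .I → Big t v → Big (.app s t) v
  | appK {s t : Tm} : Big s .K → Big (.app s t) (.K1 t)
  | appS {s t : Tm} : Big s .S → Big (.app s t) (.S1 t)
  | appK1 {s t r v : Tm} : Big s (.K1 r) → Big r v → Big (.app s t) v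
  | appS1 {s t r : Tm} : Big s (.S1 r) → Big (.app s t) (.S2 r t)
  | appS2 {s t r q v : Tm} :
      Big s (.S2 r q) → Big (.app (.app r t) (.app q t)) v → Big (.app s t) v
  | choiceL {t s v : Tm} : Big t v → Big (.oplus t s) v
  | choiceR {t s v : Tm} : Big s v → Big (.oplus t s) v
  | appParv {s t v u w : Tm} :
      Big s (.parv v u) → Big (.par (.app v t) (.app u t)) w → Big (.app s t) w
  | par {s t v u : Tm} : Big s v → Big t u → Big (.par s t) (.parv v u)

open Relation

lemma appL_rtg {t t' : Tm} (s : Tm) (h : ReflTransGen Step t t') :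
    ReflTransGen Step (.app t s) (.app t' s) :=
  ReflTransGen.lift (fun x => Tm.app x s) (fun _ _ h => Step.appL s h) _ _ h

lemma bigVal : ∀ {t v : Tm}, Big t v → v.IsValue := by
  intro t v h
  induction h <;> first | assumption | trivial

lemma par_rtg : ∀ {s t v u : Tm}, ReflTransGen Step s v → ReflTransGen Step t u →
    v.IsValue → u.IsValue → ReflTransGen Step (.par s t) (.par v u) := by
  intro s t v u h1
  induction h1 using Relation.ReflTransGen.head_induction_on generalizing t with
  | refl =>
    intro h2 hv hu
    exact ReflTransGen.lift (fun x => Tm.par v x) (fun _ _ h => Step.parR hv h) _ _ h2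
  | head hstep hrest ih =>
    intro h2 hv hu
    rcases h2.cases_head with heq | ⟨t'', ht, hrest2⟩
    · cases heq
      exact ReflTransGen.lift (fun x => Tm.par x u) (fun _ _ h => Step.parL h hu)
        _ _ (ReflTransGen.head hstep hrest)
    · exact ReflTransGen.head (Step.parBoth hstep ht) (ih hrest2 hv hu)

lemma bigToSmall : ∀ {t v : Tm}, Big t v → ReflTransGen Step t v := by
  intro t v h
  induction h with
  | val _ => exact ReflTransGen.refl
  | appI h1 h2 ih1 ih2 =>
    exact ((appL_rtg _ ih1).trans (ReflTransGen.single (Step.beta (LStep.I _)))).trans ih2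
  | appK h1 ih1 =>
    exact (appL_rtg _ ih1).trans (ReflTransGen.single (Step.beta (LStep.K _)))
  | appS h1 ih1 =>
    exact (appL_rtg _ ih1).trans (ReflTransGen.single (Step.beta (LStep.S _)))
  | appK1 h1 h2 ih1 ih2 =>
    exact ((appL_rtg _ ih1).trans (ReflTransGen.single (Step.beta (LStep.K1 _ _)))).trans ih2
  | appS1 h1 ih1 =>
    exact (appL_rtg _ ih1).trans (ReflTransGen.single (Step.beta (LStep.S1 _ _)))
  | appS2 h1 h2 ih1 ih2 =>
    exact ((appL_rtg _ ih1).trans (ReflTransGen.single (Step.beta (LStep.S2 _ _ _)))).trans ih2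
  | choiceL _ ih => exact ReflTransGen.head (Step.choiceL _ _) ih
  | choiceR _ ih => exact ReflTransGen.head (Step.choiceR _ _) ih
  | appParv h1 h2 ih1 ih2 =>
    exact ((appL_rtg _ ih1).trans (ReflTransGen.single (Step.beta (LStep.parv _ _ _)))).trans ih2
  | par h1 h2 ih1 ih2 =>
    exact (par_rtg ih1 ih2 (bigVal h1) (bigVal h2)).trans
      (ReflTransGen.single (Step.parVal (bigVal h1) (bigVal h2)))

lemma stepBig : ∀ {t t' v : Tm}, Step t t' → Big t' v → Big t v := by
  intro t t' v h
  induction h generalizing v with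
  | appL s h ih =>
    intro hb
    cases hb with
    | val hv => exact hv.elim
    | appI h1 h2 => exact Big.appI (ih h1) h2
    | appK h1 => exact Big.appK (ih h1)
    | appS h1 => exact Big.appS (ih h1)
    | appK1 h1 h2 => exact Big.appK1 (ih h1) h2
    | appS1 h1 => exact Big.appS1 (ih h1)
    | appS2 h1 h2 => exact Big.appS2 (ih h1) h2
    | appParv h1 h2 => exact Big.appParv (ih h1) h2
  | beta hl =>
    intro hb
    cases hl with
    | S t => cases hb with | val _ => exact Big.appS (Big.val trivial)
    | S1 t s => cases hb with | val _ => exact Big.appS1 (Big.val trivial)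
    | S2 t s r => exact Big.appS2 (Big.val trivial) hb
    | K t => cases hb with | val _ => exact Big.appK (Big.val trivial)
    | K1 t s => exact Big.appK1 (Big.val trivial) hb
    | I t => exact Big.appI (Big.val trivial) hb
    | parv t s r => exact Big.appParv (Big.val trivial) hb
  | choiceL t s => intro hb; exact Big.choiceL hb
  | choiceR t s => intro hb; exact Big.choiceR hb
  | parBoth h1 h2 ih1 ih2 =>
    intro hb
    cases hb with
    | val hv => exact hv.elim
    | par ha hb2 => exact Big.par (ih1 ha) (ih2 hb2)
  | parR hv h ih =>
    intro hb
    cases hb with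
    | val hv' => exact hv'.elim
    | par ha hb2 => exact Big.par ha (ih hb2)
  | parL h hv ih =>
    intro hb
    cases hb with
    | val hv' => exact hv'.elim
    | par ha hb2 => exact Big.par (ih ha) hb2
  | parVal ht hs =>
    intro hb
    cases hb with
    | val _ => exact Big.par (Big.val ht) (Big.val hs)

/-- Big-step/small-step equivalence for call-by-name xCL with erratic choice
and parallel composition. -/
theorem xCL_parallel_big_iff_small (t v : Tm) (hv : v.IsValue) :
    Big t v ↔ Relation.ReflTransGen Step t v := by
  constructor
  · exact bigToSmall
  · intro h
    induction h using Relation.ReflTransGen.head_induction_on with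
    | refl => exact Big.val hv
    | head hstep _ ih => exact stepBig hstep ih
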